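/- Suppose the harmonic curvature functions H*₁,…,H*_{n-2} (defined recursively from positive curvatures k₁,…,k_{n-1} and signs εⱼ = ±1) satisfy H*_{n-2}(s) ≠ 0 for all s, and the function ε_{n-3}(H*₁)² + ε_{n-4}(H*₂)² + … + ε₀(H*_{n-2})² is a (non-zero) constant on I. Then (H*_{n-2})′ = k₁ H*_{n-3} on I. -/

import Mathlib

open scoped BigOperators

theorem stmt_2
    (n : ℕ) (hn : 3 ≤ n) (a b : ℝ) (hab : a < b)
    (k : ℕ → ℝ → ℝ) (ε : ℕ → ℝ) (H : ℕ → ℝ → ℝ)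
    (hε : ∀ j, ε j = 1 ∨ ε j = -1)
    (hk : ∀ i, 1 ≤ i → i ≤ n - 1 → ∀ t ∈ Set.Ioo a b, 0 < k i t)
    (hksmooth : ∀ i, ContDiffOn ℝ (⊤ : ℕ∞) (k i) (Set.Ioo a b))
    (hHdiff : ∀ i, ∀ t ∈ Set.Ioo a b, DifferentiableAt ℝ (H i) t)
    (hH0 : ∀ t, H 0 t = 0)
    (hH1 : ∀ t ∈ Set.Ioo a b, H 1 t = ε (n - 3) * ε (n - 2) * (k (n - 1) t / k (n - 2) t))
    (hHrec : ∀ i, 2 ≤ i → i ≤ n - 2 → ∀ t ∈ Set.Ioo a b,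
      H i t = (k (n - i) t * H (i - 2) t - deriv (H (i - 1)) t) *
        (ε (n - (i + 2)) * ε (n - (i + 1)) / k (n - (i + 1)) t))
    (hHne : ∀ t ∈ Set.Ioo a b, H (n - 2) t ≠ 0)
    (c : ℝ) (hc : c ≠ 0)
    (hconst : ∀ t ∈ Set.Ioo a b,
      ∑ i ∈ Finset.Icc 1 (n - 2), ε (n - (i + 2)) * (H i t) ^ 2 = c) :
    ∀ t ∈ Set.Ioo a b, deriv (H (n - 2)) t = k 1 t * H (n - 3) t := by
  have hε2 : ∀ j, ε j * ε j = 1 := by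
    intro j; rcases hε j with h | h <;> rw [h] <;> norm_num
  have hεne : ∀ j, ε j ≠ 0 := by
    intro j; rcases hε j with h | h <;> rw [h] <;> norm_num
  intro t ht
  have hO : Set.Ioo a b ∈ nhds t := isOpen_Ioo.mem_nhds ht
  -- step A+B : derivative of sum is zero
  have hsum : HasDerivAt (fun s => ∑ i ∈ Finset.Icc 1 (n - 2), ε (n - (i + 2)) * (H i s) ^ 2)
      (∑ i ∈ Finset.Icc 1 (n - 2), ε (n - (i + 2)) * (2 * H i t * deriv (H i) t)) t := by
    apply HasDerivAt.fun_sum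
    intro i _
    have h := ((hHdiff i t ht).hasDerivAt.pow 2).const_mul (ε (n - (i + 2)))
    simpa using h
  have hzero : ∑ i ∈ Finset.Icc 1 (n - 2), ε (n - (i + 2)) * (2 * H i t * deriv (H i) t) = 0 := by
    have he : (fun s => ∑ i ∈ Finset.Icc 1 (n - 2), ε (n - (i + 2)) * (H i s) ^ 2)
        =ᶠ[nhds t] (fun _ => c) :=
      Filter.eventuallyEq_of_mem hO (fun s hs => hconst s hs)
    have := he.deriv_eq
    rw [deriv_const] at this
    rw [← hsum.deriv, this]
  -- step C : expression for derivatives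
  have hstep : ∀ j, j < n - 3 →
      deriv (H (j + 1)) t = k (n - (j + 2)) t * H j t
        - ε (n - (j + 4)) * ε (n - (j + 3)) * k (n - (j + 3)) t * H (j + 2) t := by
    intro j hj
    have hrec := hHrec (j + 2) (by omega) (by omega) t ht
    have hkpos := hk (n - (j + 3)) (by omega) (by omega) t ht
    have hkne : k (n - (j + 3)) t ≠ 0 := ne_of_gt hkpos
    have h4 : j + 2 + 2 = j + 4 := by omega
    have h3 : j + 2 + 1 = j + 3 := by omega
    simp only [h4, h3, Nat.add_sub_cancel, show j + 2 - 2 = j from by omega,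
      show j + 2 - 1 = j + 1 from by omega] at hrec
    have he1 := hε2 (n - (j + 4))
    have he2 := hε2 (n - (j + 3))
    field_simp at hrec
    linear_combination (ε (n - (j + 4)) * ε (n - (j + 3))) * hrec
      + (k (n - (j + 2)) t * H j t - deriv (H (j + 1)) t) *
        (ε (n - (j + 3)) * ε (n - (j + 3))) * he1
      + (k (n - (j + 2)) t * H j t - deriv (H (j + 1)) t) * he2
  -- telescoping
  set m := n - 3 with hm
  set A : ℕ → ℝ := fun j => ε (n - (j + 3)) * k (n - (j + 2)) t * H j t * H (j + 1) t with hA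
  have hsplit : ∑ i ∈ Finset.Icc 1 (n - 2), ε (n - (i + 2)) * (2 * H i t * deriv (H i) t)
      = (∑ i ∈ Finset.Icc 1 m, ε (n - (i + 2)) * (2 * H i t * deriv (H i) t))
        + ε (n - (m + 1 + 2)) * (2 * H (m + 1) t * deriv (H (m + 1)) t) := by
    rw [show n - 2 = m + 1 from by omega]
    exact Finset.sum_Icc_succ_top (by omega) _
  have htel : ∑ i ∈ Finset.Icc 1 m, ε (n - (i + 2)) * (2 * H i t * deriv (H i) t)
      = 2 * A 0 - 2 * A m := by
    have h1 : ∑ i ∈ Finset.Icc 1 m, ε (n - (i + 2)) * (2 * H i t * deriv (H i) t)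
        = ∑ j ∈ Finset.range m, (2 * A j - 2 * A (j + 1)) := by
      rw [show Finset.Icc 1 m = Finset.Ico 1 (m + 1) from by
        rw [Finset.Ico_add_one_right_eq_Icc], Finset.sum_Ico_eq_sum_range]
      simp only [Nat.add_sub_cancel]
      apply Finset.sum_congr rfl
      intro j hj
      have hjm : j < m := Finset.mem_range.mp hj
      have hd := hstep j (by omega)
      have h1j : 1 + j = j + 1 := by omega
      rw [h1j, hd, hA]
      simp only []
      have he2 := hε2 (n - (j + 3))
      have hi : j + 1 + 2 = j + 3 := by omega
      have hi2 : j + 1 + 1 = j + 2 := by omega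
      rw [hi, hi2]
      linear_combination (-(2 * H (j + 1) t * ε (n - (j + 4)) * k (n - (j + 3)) t * H (j + 2) t)) * he2
    rw [h1]
    have := Finset.sum_range_sub' (fun j => 2 * A j) m
    simpa using this
  have hA0 : A 0 = 0 := by simp [hA, hH0]
  have hAm : A m = ε 0 * k 1 t * H (n - 3) t * H (n - 2) t := by
    rw [hA]
    simp only []
    rw [show n - (m + 3) = 0 from by omega, show n - (m + 2) = 1 from by omega,
      show m + 1 = n - 2 from by omega, hm]
  -- assemble
  rw [hsplit, htel, hA0, hAm] at hzero
  rw [show n - (m + 1 + 2) = 0 from by omega, show m + 1 = n - 2 from by omega] at hzero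
  have hHne' := hHne t ht
  have hεne0 := hεne 0
  have key : ε 0 * H (n - 2) t * (deriv (H (n - 2)) t - k 1 t * H (n - 3) t) = 0 := by
    linear_combination hzero / 2
  rcases mul_eq_zero.mp key with h | h
  · rcases mul_eq_zero.mp h with h' | h'
    · exact absurd h' hεne0
    · exact absurd h' hHne'
  · linarith [sub_eq_zero.mp h]
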